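/- Let Θ*∈S^d be positive definite and let Z∈S^{d+1} be positive semidefinite. Then the function (h,H) ↦ Γ(h,H;Z) is convex on the convex set {(h,H): h∈ℝ^d, H∈S^d, H≺Θ*^{−1}}. -/

import Mathlib

open Matrix MeasureTheory Real Filter

noncomputable section

/-- Frobenius norm of a matrix. -/
def frobNorm {d : ℕ} (A : Matrix (Fin d) (Fin d) ℝ) : ℝ :=
  Real.sqrt (∑ i, ∑ j, (A i j) ^ 2)

/-- Spectral norm of a matrix. -/
def specNorm {d : ℕ} (A : Matrix (Fin d) (Fin d) ℝ) : ℝ :=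
  ‖Matrix.toEuclideanCLM (𝕜 := ℝ) A‖

open scoped Classical in
/-- The square root of a positive semidefinite real matrix (junk value `0` otherwise). -/
def msqrt {d : ℕ} (A : Matrix (Fin d) (Fin d) ℝ) : Matrix (Fin d) (Fin d) ℝ :=
  if h : A.PosSemidef then (h.1.eigenvectorUnitary : Matrix (Fin d) (Fin d) ℝ) *
    diagonal ((↑) ∘ Real.sqrt ∘ h.1.eigenvalues) * (star h.1.eigenvectorUnitary : Matrix (Fin d) (Fin d) ℝ) else 0

/-- The standard Gaussian distribution on ℝ^d. -/
def stdGaussian (d : ℕ) : Measure (Fin d → ℝ) :=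
  Measure.pi fun _ => ProbabilityTheory.gaussianReal 0 1

/-- The Gaussian distribution `N(θ,Θ)` on ℝ^d: the law of `θ + Θ^{1/2} ξ`. -/
def gaussianVec {d : ℕ} (θ : Fin d → ℝ) (Θ : Matrix (Fin d) (Fin d) ℝ) :
    Measure (Fin d → ℝ) :=
  (stdGaussian d).map (fun ξ => θ + (msqrt Θ).mulVec ξ)

/-- The (d+1)×(d+1) symmetric matrix `[[H,h];[hᵀ,0]]`. -/
def liftSym {d : ℕ} (H : Matrix (Fin d) (Fin d) ℝ) (h : Fin d → ℝ) :
    Matrix (Fin (d+1)) (Fin (d+1)) ℝ := fun i j =>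
  if hi : (i : ℕ) < d then
    if hj : (j : ℕ) < d then H ⟨i, hi⟩ ⟨j, hj⟩ else h ⟨i, hi⟩
  else if hj : (j : ℕ) < d then h ⟨j, hj⟩ else 0

/-- The d×(d+1) matrix `[H,h]`. -/
def liftRect {d : ℕ} (H : Matrix (Fin d) (Fin d) ℝ) (h : Fin d → ℝ) :
    Matrix (Fin d) (Fin (d+1)) ℝ := fun i j =>
  if hj : (j : ℕ) < d then H i ⟨j, hj⟩ else h i

/-- The vector `[θ;1] ∈ ℝ^{d+1}`. -/
def append1 {d : ℕ} (θ : Fin d → ℝ) : Fin (d+1) → ℝ := fun i =>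
  if hi : (i : ℕ) < d then θ ⟨i, hi⟩ else 1

/-- `Υ(H;Θ)`. -/
def Upsilon {d : ℕ} (Θstar : Matrix (Fin d) (Fin d) ℝ) (δ : ℝ)
    (H Θ : Matrix (Fin d) (Fin d) ℝ) : ℝ :=
  -(1/2) * Real.log ((1 - msqrt Θstar * H * msqrt Θstar).det)
  + (1/2) * ((Θ - Θstar) * H).trace
  + δ * (2 + δ) * (frobNorm (msqrt Θstar * H * msqrt Θstar)) ^ 2
      / (2 * (1 - specNorm (msqrt Θstar * H * msqrt Θstar)))

/-- `Γ(h,H;Z)`. -/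
def Gammaf {d : ℕ} (Θstar : Matrix (Fin d) (Fin d) ℝ) (h : Fin d → ℝ)
    (H : Matrix (Fin d) (Fin d) ℝ) (Z : Matrix (Fin (d+1)) (Fin (d+1)) ℝ) : ℝ :=
  (1/2) * (Z * (liftSym H h + (liftRect H h)ᵀ * (Θstar⁻¹ - H)⁻¹ * liftRect H h)).trace

/-- `Φ(h,H;Θ,Z) = Υ(H;Θ) + Γ(h,H;Z)`. -/
def PhiG {d : ℕ} (Θstar : Matrix (Fin d) (Fin d) ℝ) (δ : ℝ) (h : Fin d → ℝ)
    (H Θ : Matrix (Fin d) (Fin d) ℝ) (Z : Matrix (Fin (d+1)) (Fin (d+1)) ℝ) : ℝ :=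
  Upsilon Θstar δ H Θ + Gammaf Θstar h H Z

section AuxConvexity

variable {n m : Type*} [Fintype n] [Fintype m] [DecidableEq n] [DecidableEq m]

lemma aux_smul_posSemidef {A : Matrix n n ℝ} (hA : A.PosSemidef) {a : ℝ} (ha : 0 ≤ a) :
    (a • A).PosSemidef := by
  refine .of_dotProduct_mulVec_nonneg ?_ (fun x => ?_)
  · show (a • A)ᴴ = a • A
    rw [conjTranspose_smul, star_trivial, hA.1.eq]
  · rw [smul_mulVec, dotProduct_smul, smul_eq_mul]
    exact mul_nonneg ha (hA.dotProduct_mulVec_nonneg x)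

lemma aux_smul_posDef {A : Matrix n n ℝ} (hA : A.PosDef) {a : ℝ} (ha : 0 < a) :
    (a • A).PosDef := by
  refine .of_dotProduct_mulVec_pos ?_ (fun x hx => ?_)
  · show (a • A)ᴴ = a • A
    rw [conjTranspose_smul, star_trivial, hA.1.eq]
  · rw [smul_mulVec, dotProduct_smul, smul_eq_mul]
    exact mul_pos ha (hA.dotProduct_mulVec_pos hx)

lemma aux_posDef_comb {A B : Matrix n n ℝ} (hA : A.PosDef) (hB : B.PosDef)
    {a b : ℝ} (ha : 0 ≤ a) (hb : 0 ≤ b) (hab : a + b = 1) :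
    (a • A + b • B).PosDef := by
  rcases ha.eq_or_lt with rfl | ha'
  · have hb1 : b = 1 := by linarith
    simpa [hb1] using hB
  rcases hb.eq_or_lt with rfl | hb'
  · have ha1 : a = 1 := by linarith
    simpa [ha1] using hA
  exact (aux_smul_posDef hA ha').add (aux_smul_posDef hB hb')

lemma aux_trace_nonneg {A : Matrix n n ℝ} (hA : A.PosSemidef) : 0 ≤ A.trace := by
  rw [Matrix.trace]
  apply Finset.sum_nonneg
  intro i _
  have h := hA.dotProduct_mulVec_nonneg (Pi.single i 1)
  simpa [Matrix.mulVec_single, Matrix.diag, dotProduct, Pi.single_apply] using h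

lemma aux_trace_mul_nonneg {Z M : Matrix n n ℝ} (hZ : Z.PosSemidef) (hM : M.PosSemidef) :
    0 ≤ (Z * M).trace := by
  obtain ⟨B, hB⟩ : ∃ B : Matrix n n ℝ, M = Bᴴ * B := by
    open MatrixOrder in
    exact ⟨CFC.sqrt M, by rw [(CFC.sqrt_nonneg M).posSemidef.1.eq, CFC.sqrt_mul_sqrt_self M hM.nonneg]⟩
  rw [hB, ← Matrix.mul_assoc, Matrix.trace_mul_cycle]
  exact aux_trace_nonneg (hZ.mul_mul_conjTranspose_same B)

lemma aux_trace_mul_mono {Z M N : Matrix n n ℝ} (hZ : Z.PosSemidef)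
    (h : (N - M).PosSemidef) : (Z * M).trace ≤ (Z * N).trace := by
  have h0 := aux_trace_mul_nonneg hZ h
  rw [Matrix.mul_sub, Matrix.trace_sub] at h0
  linarith

lemma aux_schur {A : Matrix n n ℝ} (hA : A.PosDef) (X : Matrix n m ℝ) :
    (Matrix.fromBlocks A X Xᴴ (Xᴴ * A⁻¹ * X)).PosSemidef := by
  haveI := hA.isUnit.invertible
  rw [Matrix.PosDef.fromBlocks₁₁ X _ hA]
  simpa using Matrix.PosSemidef.zero

lemma aux_joint {A B : Matrix n n ℝ} (hA : A.PosDef) (hB : B.PosDef)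
    (X Y : Matrix n m ℝ) {a b : ℝ} (ha : 0 ≤ a) (hb : 0 ≤ b) (hab : a + b = 1) :
    ((a • (Xᵀ * A⁻¹ * X) + b • (Yᵀ * B⁻¹ * Y)) -
      (a • X + b • Y)ᵀ * (a • A + b • B)⁻¹ * (a • X + b • Y)).PosSemidef := by
  have hC : (a • A + b • B).PosDef := aux_posDef_comb hA hB ha hb hab
  haveI := hC.isUnit.invertible
  have hXt : ∀ (W : Matrix n m ℝ), Wᵀ = Wᴴ := fun W =>
    (Matrix.conjTranspose_eq_transpose_of_trivial W).symm
  simp only [hXt]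
  have hM : (Matrix.fromBlocks (a • A + b • B) (a • X + b • Y) (a • X + b • Y)ᴴ
      (a • (Xᴴ * A⁻¹ * X) + b • (Yᴴ * B⁻¹ * Y))).PosSemidef := by
    have h1 := aux_smul_posSemidef (aux_schur hA X) ha
    have h2 := aux_smul_posSemidef (aux_schur hB Y) hb
    have hsum := h1.add h2
    have heq : a • Matrix.fromBlocks A X Xᴴ (Xᴴ * A⁻¹ * X)
        + b • Matrix.fromBlocks B Y Yᴴ (Yᴴ * B⁻¹ * Y)
        = Matrix.fromBlocks (a • A + b • B) (a • X + b • Y) (a • X + b • Y)ᴴ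
          (a • (Xᴴ * A⁻¹ * X) + b • (Yᴴ * B⁻¹ * Y)) := by
      rw [Matrix.fromBlocks_smul, Matrix.fromBlocks_smul, Matrix.fromBlocks_add,
        Matrix.conjTranspose_add, Matrix.conjTranspose_smul, Matrix.conjTranspose_smul,
        star_trivial, star_trivial]
    rwa [heq] at hsum
  exact (Matrix.PosDef.fromBlocks₁₁ _ _ hC).mp hM

end AuxConvexity

lemma liftSym_comb {d : ℕ} (a b : ℝ) (h₁ h₂ : Fin d → ℝ)
    (H₁ H₂ : Matrix (Fin d) (Fin d) ℝ) :
    liftSym (a • H₁ + b • H₂) (a • h₁ + b • h₂)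
      = a • liftSym H₁ h₁ + b • liftSym H₂ h₂ := by
  ext i j
  simp only [liftSym, Matrix.add_apply, Matrix.smul_apply, Pi.add_apply, Pi.smul_apply,
    smul_eq_mul]
  split_ifs <;> simp

lemma liftRect_comb {d : ℕ} (a b : ℝ) (h₁ h₂ : Fin d → ℝ)
    (H₁ H₂ : Matrix (Fin d) (Fin d) ℝ) :
    liftRect (a • H₁ + b • H₂) (a • h₁ + b • h₂)
      = a • liftRect H₁ h₁ + b • liftRect H₂ h₂ := by
  ext i j
  simp only [liftRect, Matrix.add_apply, Matrix.smul_apply, Pi.add_apply, Pi.smul_apply,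
    smul_eq_mul]
  split_ifs <;> simp

lemma comb_sub {d : ℕ} {a b : ℝ} (hab : a + b = 1) (T H₁ H₂ : Matrix (Fin d) (Fin d) ℝ) :
    T - (a • H₁ + b • H₂) = a • (T - H₁) + b • (T - H₂) := by
  have h : a • (T - H₁) + b • (T - H₂) = (a + b) • T - (a • H₁ + b • H₂) := by
    rw [smul_sub, smul_sub, add_smul]; abel
  rw [h, hab, one_smul]

/-- for fixed positive definite `Θ*` and positive semidefinite
`Z ∈ S^{d+1}`, the function `(h,H) ↦ Γ(h,H;Z)` is convex on the convex set
`{(h,H) : h ∈ ℝ^d, H ∈ S^d, H ≺ Θ*⁻¹}`. -/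
theorem statement2 {d : ℕ} (Θstar : Matrix (Fin d) (Fin d) ℝ) (hstarSym : Θstar.IsSymm)
    (hstar : Θstar.PosDef)
    (Z : Matrix (Fin (d+1)) (Fin (d+1)) ℝ) (hZ : Z.PosSemidef) :
    ConvexOn ℝ
      {p : (Fin d → ℝ) × Matrix (Fin d) (Fin d) ℝ | p.2.IsSymm ∧ (Θstar⁻¹ - p.2).PosDef}
      (fun p => Gammaf Θstar p.1 p.2 Z) := by
  constructor
  · -- convexity of the set
    intro p hp q hq a b ha hb hab
    refine ⟨?_, ?_⟩
    · show ((a • p + b • q).2)ᵀ = (a • p + b • q).2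
      show (a • p.2 + b • q.2)ᵀ = a • p.2 + b • q.2
      rw [Matrix.transpose_add, Matrix.transpose_smul, Matrix.transpose_smul,
        hp.1.eq, hq.1.eq]
    · show (Θstar⁻¹ - (a • p.2 + b • q.2)).PosDef
      rw [comb_sub hab]
      exact aux_posDef_comb hp.2 hq.2 ha hb hab
  · -- convexity of the function
    intro p hp q hq a b ha hb hab
    have lin : ∀ (M N : Matrix (Fin (d+1)) (Fin (d+1)) ℝ),
        (Z * (a • M + b • N)).trace = a * (Z * M).trace + b * (Z * N).trace := by
      intro M N
      rw [Matrix.mul_add, mul_smul_comm, mul_smul_comm, Matrix.trace_add,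
        Matrix.trace_smul, Matrix.trace_smul, smul_eq_mul, smul_eq_mul]
    have expand : ∀ (M N : Matrix (Fin (d+1)) (Fin (d+1)) ℝ),
        (Z * (M + N)).trace = (Z * M).trace + (Z * N).trace := by
      intro M N
      rw [Matrix.mul_add, Matrix.trace_add]
    have h1 : (a • p + b • q).1 = a • p.1 + b • q.1 := rfl
    have h2 : (a • p + b • q).2 = a • p.2 + b • q.2 := rfl
    have mono : (Z * ((a • liftRect p.2 p.1 + b • liftRect q.2 q.1)ᵀ
          * (a • (Θstar⁻¹ - p.2) + b • (Θstar⁻¹ - q.2))⁻¹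
          * (a • liftRect p.2 p.1 + b • liftRect q.2 q.1))).trace
        ≤ a * (Z * ((liftRect p.2 p.1)ᵀ * (Θstar⁻¹ - p.2)⁻¹ * liftRect p.2 p.1)).trace
        + b * (Z * ((liftRect q.2 q.1)ᵀ * (Θstar⁻¹ - q.2)⁻¹ * liftRect q.2 q.1)).trace := by
      have key := aux_joint hp.2 hq.2 (liftRect p.2 p.1) (liftRect q.2 q.1) ha hb hab
      have := aux_trace_mul_mono hZ key
      rwa [lin] at this
    simp only [smul_eq_mul, Gammaf, h1, h2, liftSym_comb, liftRect_comb, comb_sub hab]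
    rw [expand, lin, expand, expand]
    linarith

end
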